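/- Let w be a nonempty word with canonical factorization w = w1 w2 ... wn (each wi Lyndon, w1 ≥ w2 ≥ ... ≥ wn). If ℓ is a Lyndon word that is a cyclic permutation of w, then there exists an index i in {1, 2, ..., n} such that for every positive integer k, the k-fold concatenation w^k equals w1 w2 ... w_{i-1} ℓ^{k-1} w_i w_{i+1} ... w_n, where ℓ^{k-1} denotes ℓ concatenated with itself k−1 times. -/

import Mathlib

/- Words over a linearly ordered alphabet `I` are lists, compared by the
lexicographic order of Lean's `LinearOrder (List I)` instance, in which a word
is smaller than any word of which it is a proper prefix. -/

variable {I : Type*} [LinearOrder I]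

/-- A nonempty word is *Lyndon* if it is lexicographically smaller than
every proper nonempty suffix of itself. -/
def IsLyndon (w : List I) : Prop :=
  w ≠ [] ∧ ∀ i, 0 < i → i < w.length → w < w.drop i

/-- `r` is the longest proper suffix of `l` that is Lyndon
(the right factor `l^r` of the costandard factorization). -/
def LongestLyndonSuffix (l r : List I) : Prop :=
  r <:+ l ∧ r.length < l.length ∧ IsLyndon r ∧
    ∀ r', r' <:+ l → r'.length < l.length → IsLyndon r' → r'.length ≤ r.length

/-- `p` is the longest proper prefix of `l` that is Lyndon
(the left factor `l^{ls}` of the standard factorization). -/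
def LongestLyndonPrefix (l p : List I) : Prop :=
  p <+: l ∧ p.length < l.length ∧ IsLyndon p ∧
    ∀ p', p' <+: l → p'.length < l.length → IsLyndon p' → p'.length ≤ p.length

/-- `fs` is the canonical factorization of `w`: a nonempty, lexicographically
nonincreasing list of Lyndon words whose concatenation is `w`. -/
def IsCanonicalFactorization (w : List I) (fs : List (List I)) : Prop :=
  w = fs.flatten ∧ fs ≠ [] ∧ (∀ f ∈ fs, IsLyndon f) ∧ fs.Chain' (· ≥ ·)
lemma aux_lt_append (x : List I) {y : List I} (hy : y ≠ []) : x < x ++ y := by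
  show List.Lex (· < ·) x (x ++ y)
  induction x with
  | nil =>
    cases y with
    | nil => exact absurd rfl hy
    | cons a t => exact List.Lex.nil
  | cons a t ih => exact List.Lex.cons ih

lemma aux_le_append (x y : List I) : x ≤ x ++ y := by
  cases eq_or_ne y [] with
  | inl h => simp [h]
  | inr h => exact (aux_lt_append x h).le

/-- boundary decomposition -/
lemma aux_boundary (fs : List (List I)) (n : ℕ) (hn : n ≤ fs.flatten.length) :
    (∃ j, j ≤ fs.length ∧ ((fs.take j).flatten).length = n) ∨
    (∃ p q f u v, fs = p ++ f :: q ∧ (f : List I) = u ++ v ∧ u ≠ [] ∧ v ≠ [] ∧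
      n = p.flatten.length + u.length) := by
  induction fs generalizing n with
  | nil =>
    left; exact ⟨0, le_rfl, by simpa using (Nat.le_zero.mp (by simpa using hn)).symm⟩
  | cons f rest ih =>
    by_cases hf : f.length ≤ n
    · have h2 : n - f.length ≤ rest.flatten.length := by
        simp only [List.flatten_cons, List.length_append] at hn; omega
      rcases ih _ h2 with ⟨j, hj, hlen⟩ | ⟨p, q, g, u, v, hfs, hg, hu, hv, hnval⟩
      · left
        exact ⟨j + 1, by simpa using hj, by simp [hlen]; omega⟩
      · right
        exact ⟨f :: p, q, g, u, v, by rw [hfs]; rfl, hg, hu, hv, by simp only [List.flatten_cons, List.length_append]; omega⟩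
    · push_neg at hf
      rcases Nat.eq_zero_or_pos n with h0 | h0
      · left; exact ⟨0, Nat.zero_le _, by simp [h0]⟩
      · right
        refine ⟨[], rest, f, f.take n, f.drop n, rfl, (List.take_append_drop n f).symm,
          ?_, ?_, by simp [min_eq_left hf.le]⟩
        · intro h
          have := congrArg List.length h
          simp [min_eq_left hf.le] at this; omega
        · intro h
          have := congrArg List.length h
          simp at this; omega

lemma aux_pow (A B ℓ w : List I) (hw : w = A ++ B) (hl : ℓ = B ++ A) (k : ℕ) :
    (List.replicate (k+1) w).flatten = A ++ (List.replicate k ℓ).flatten ++ B := by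
  induction k with
  | zero => simp [hw]
  | succ k ihk =>
    rw [List.replicate_succ, List.flatten_cons, ihk, List.replicate_succ, List.flatten_cons,
      hw, hl]
    simp [List.append_assoc]

/-- If `ℓ` is a Lyndon cyclic permutation of a word `w` with canonical factorization
`w = w1 … wn`, then there is an index such that for every `k ≥ 1`,
`w^k = w1 … w_{i-1} ℓ^{k-1} w_i … w_n`. -/
theorem lyndon_cyclic_perm_power (w ℓ : List I) (fs : List (List I))
    (hfac : IsCanonicalFactorization w fs) (hℓ : IsLyndon ℓ)
    (hcyc : ∃ a b : List I, w = a ++ b ∧ ℓ = b ++ a) :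
    ∃ j, j < fs.length ∧ ∀ k : ℕ, 0 < k →
      (List.replicate k w).flatten =
        (fs.take j).flatten ++ (List.replicate (k - 1) ℓ).flatten
          ++ (fs.drop j).flatten := by
  obtain ⟨hwflat, hfsne, hLy, _⟩ := hfac
  obtain ⟨a, b, hab, hlab⟩ := hcyc
  by_cases hb : b = []
  · subst hb
    rw [List.append_nil] at hab
    refine ⟨0, List.length_pos_iff.mpr hfsne, fun k hk => ?_⟩
    obtain ⟨k', rfl⟩ : ∃ k', k = k' + 1 := ⟨k - 1, (Nat.succ_pred_eq_of_pos hk).symm⟩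
    simpa using aux_pow [] fs.flatten ℓ w (by simp [hwflat])
      (by simp [hlab, ← hab, hwflat]) k'
  · have hnle : a.length ≤ fs.flatten.length := by
      rw [← hwflat, hab]; simp
    rcases aux_boundary fs a.length hnle with
      ⟨j, hj, hlen⟩ | ⟨p, q, f, u, v, hfs, hf, hu, hv, hnval⟩
    · have hsplit : w = (fs.take j).flatten ++ (fs.drop j).flatten := by
        rw [hwflat, ← List.flatten_append, List.take_append_drop]
      have ha : a = (fs.take j).flatten := by
        have h1 : a = w.take a.length := by rw [hab, List.take_left]
        rw [h1, hsplit, List.take_left' hlen]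
      have hbB : b = (fs.drop j).flatten := by
        have h1 : b = w.drop a.length := by rw [hab, List.drop_left]
        rw [h1, hsplit, List.drop_left' hlen]
      have hjlt : j < fs.length := by
        by_contra h
        push_neg at h
        rw [List.drop_eq_nil_of_le h] at hbB
        exact hb hbB
      refine ⟨j, hjlt, fun k hk => ?_⟩
      obtain ⟨k', rfl⟩ : ∃ k', k = k' + 1 := ⟨k - 1, (Nat.succ_pred_eq_of_pos hk).symm⟩
      simpa using aux_pow _ _ ℓ w hsplit (by rw [hlab, ha, hbB]) k'
    · exfalso
      have hfLy : IsLyndon f := hLy f (by rw [hfs]; simp)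
      set P := p.flatten with hP
      set S := q.flatten with hS
      have hw2 : w = (P ++ u) ++ (v ++ S) := by
        rw [hwflat, hfs]; simp [hf, List.append_assoc, hP, hS]
      have hnval' : a.length = (P ++ u).length := by simp [hnval]
      have ha : a = P ++ u := by
        have h1 : a = w.take a.length := by rw [hab, List.take_left]
        rw [h1, hw2, List.take_left' hnval'.symm]
      have hbB : b = v ++ S := by
        have h1 : b = w.drop a.length := by rw [hab, List.drop_left]
        rw [h1, hw2, List.drop_left' hnval'.symm]
      have hupos : 0 < u.length := List.length_pos_iff.mpr hu
      have hvpos : 0 < v.length := List.length_pos_iff.mpr hv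
      have h1 : u ++ v < v := by
        have h := hfLy.2 u.length hupos (by rw [hf]; simp; omega)
        rwa [hf, List.drop_left] at h
      have h2 : u < u ++ v := aux_lt_append u hv
      have hleq : ℓ = ((v ++ S) ++ P) ++ u := by
        rw [hlab, hbB, ha]; simp [List.append_assoc]
      have h3 : ℓ < u := by
        have hm : 0 < ((v ++ S) ++ P).length := by simp; omega
        have hml : ((v ++ S) ++ P).length < ℓ.length := by
          rw [hleq]; simp; omega
        have h := hℓ.2 _ hm hml
        rw [hleq, List.drop_left] at h
        rw [hleq]; exact h
      have h4 : v ≤ ℓ := by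
        rw [hleq, List.append_assoc, List.append_assoc]
        exact aux_le_append v _
      exact absurd (h4.trans_lt (h3.trans (h2.trans h1))) (lt_irrefl v)
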